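/- Let C be an [n,k,d,b,a,λ] hierarchical locally recoverable code with 2 ≤ λ ≤ b, and set ρ = b(a+λ)/(b+1) - (λ-1). Write k-1 = ⌊(k-1)/ρ⌋·ρ + k₁ with 0 ≤ k₁ < ρ. Then ⌊(k-1)/ρ⌋·(a+λ) + k₁ + ⌊k₁/b⌋ ≤ n - d. -/

import Mathlib

open Module Submodule Matrix

private lemma finrank_span_biUnion_le' {F V : Type*} [Field F] [AddCommGroup V] [Module F V]
    [FiniteDimensional F V] {ι : Type*} (I : Finset ι) (g : ι → Set V) (c : ℕ)
    (h : ∀ i ∈ I, finrank F (span F (g i)) ≤ c) :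
    finrank F (span F (⋃ i ∈ I, g i)) ≤ I.card * c := by
  classical
  induction I using Finset.induction_on with
  | empty => simp
  | @insert a s ha ih =>
    rw [Finset.set_biUnion_insert, Submodule.span_union, Finset.card_insert_of_notMem ha,
      add_mul, one_mul]
    rw [add_comm (s.card * c) c]
    exact (Submodule.finrank_add_le_finrank_add_finrank _ _).trans
      (add_le_add (h a (Finset.mem_insert_self a s))
        (ih fun i hi => h i (Finset.mem_insert_of_mem hi)))

private lemma exists_vanishing_vector' {F : Type*} [Field F] {k n : ℕ}
    (G : Matrix (Fin k) (Fin n) F) (S : Finset (Fin n))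
    (h : Module.finrank F (Submodule.span F
      ((fun c : Fin n => fun r : Fin k => G r c) '' (S : Set (Fin n)))) < k) :
    ∃ x : Fin k → F, x ≠ 0 ∧ ∀ j ∈ S, Matrix.vecMul x G j = 0 := by
  classical
  set M : Matrix (Fin k) S F := G.submatrix id Subtype.val with hM
  have hrange : Set.range Mᵀ = (fun c : Fin n => fun r : Fin k => G r c) '' (S : Set (Fin n)) := by
    have : Mᵀ = (fun c : Fin n => fun r : Fin k => G r c) ∘ (Subtype.val : S → Fin n) := rfl
    rw [this, Set.range_comp, Subtype.range_coe]
  have hMrank : M.rank < k := by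
    rw [Matrix.rank_eq_finrank_span_cols, show Set.range M.col = Set.range Mᵀ from rfl, hrange]; exact h
  have hrk : Mᵀ.rank < k := by rwa [Matrix.rank_transpose]
  set L := Mᵀ.mulVecLin with hL
  have hker : LinearMap.ker L ≠ ⊥ := by
    intro hbot
    have h1 : finrank F (LinearMap.range L) + finrank F (LinearMap.ker L) = k := by
      rw [LinearMap.finrank_range_add_finrank_ker L, Module.finrank_fin_fun]
    rw [hbot, finrank_bot, add_zero] at h1
    have : Mᵀ.rank = finrank F (LinearMap.range L) := rfl
    omega
  obtain ⟨x, hxmem, hx0⟩ := Submodule.exists_mem_ne_zero_of_ne_bot hker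
  refine ⟨x, hx0, fun j hj => ?_⟩
  have h0 : Mᵀ.mulVec x ⟨j, hj⟩ = 0 := by
    have : Mᵀ.mulVec x = 0 := hxmem
    rw [this]; rfl
  simpa [hM, Matrix.mulVec, Matrix.vecMul, dotProduct, mul_comm] using h0

/-- Improved Singleton-type bound for `[n,k,d,b,a,λ]` hierarchical LRCs with
`2 ≤ λ ≤ b`. The code is given by a rank-`k` generator matrix `G` whose nonzero codewords
have weight at least `d`; the coordinates are partitioned into `ℓ` sets `A i` of size
`a + λ`, each of which is further partitioned into sets `B i j` of size `b + 1`; the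
columns indexed by each `A i` have rank at most `ρ = b(a+λ)/(b+1) - (λ-1)` and the columns
indexed by each `B i j` have rank at most `b`. Then
`⌊(k-1)/ρ⌋(a+λ) + k₁ + ⌊k₁/b⌋ ≤ n - d` where `k₁ = (k-1) mod ρ`. -/
theorem hlrc_singleton_bound {F : Type*} [Field F] [DecidableEq F]
    {n k d b a lam ℓ : ℕ}
    (hnk : k < n) (hlam2 : 2 ≤ lam) (hlamb : lam ≤ b)
    (hdvd1 : (a + lam) ∣ n) (hdvd2 : (b + 1) ∣ (a + lam))
    (hl : n = (a + lam) * ℓ)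
    (G : Matrix (Fin k) (Fin n) F)
    (hrank : G.rank = k)
    (hdist : ∀ x : Fin k → F, x ≠ 0 → d ≤ hammingNorm (Matrix.vecMul x G))
    (A : Fin ℓ → Finset (Fin n))
    (hAdisj : ∀ i i' : Fin ℓ, i ≠ i' → Disjoint (A i) (A i'))
    (hAcover : ∀ j : Fin n, ∃ i, j ∈ A i)
    (hAcard : ∀ i, (A i).card = a + lam)
    (B : Fin ℓ → Fin ((a + lam) / (b + 1)) → Finset (Fin n))
    (hBsub : ∀ i j, B i j ⊆ A i)
    (hBdisj : ∀ i, ∀ j j' : Fin ((a + lam) / (b + 1)), j ≠ j' → Disjoint (B i j) (B i j'))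
    (hBcover : ∀ i, ∀ x ∈ A i, ∃ j, x ∈ B i j)
    (hBcard : ∀ i j, (B i j).card = b + 1)
    (hArank : ∀ i, Module.finrank F
      (Submodule.span F ((fun c : Fin n => fun r : Fin k => G r c) '' ((A i : Set (Fin n)))))
        ≤ b * (a + lam) / (b + 1) - (lam - 1))
    (hBrank : ∀ i j, Module.finrank F
      (Submodule.span F ((fun c : Fin n => fun r : Fin k => G r c) '' ((B i j : Set (Fin n)))))
        ≤ b) :
    ((k - 1) / (b * (a + lam) / (b + 1) - (lam - 1))) * (a + lam)
      + (k - 1) % (b * (a + lam) / (b + 1) - (lam - 1))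
      + ((k - 1) % (b * (a + lam) / (b + 1) - (lam - 1))) / b
      ≤ n - d := by
  classical
  rcases Nat.eq_zero_or_pos k with hk0 | hkpos
  · simp [hk0]
  obtain ⟨c, hc⟩ := hdvd2
  have hb2 : 2 ≤ b := le_trans hlam2 hlamb
  have halam_pos : 0 < a + lam := by omega
  have hc1 : 1 ≤ c := by
    rcases Nat.eq_zero_or_pos c with h0 | h
    · subst h0; simp at hc; omega
    · exact h
  have hs_eq : (a + lam) / (b + 1) = c := by
    rw [hc, Nat.mul_div_cancel_left c (Nat.succ_pos b)]
  have hρ_eq : b * (a + lam) / (b + 1) = b * c := by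
    have h1 : b * (a + lam) = (b + 1) * (b * c) := by rw [hc]; ring
    rw [h1, Nat.mul_div_cancel_left _ (Nat.succ_pos b)]
  set ρ := b * (a + lam) / (b + 1) - (lam - 1) with hρ
  have hbc_b : b ≤ b * c := Nat.le_mul_of_pos_right b hc1
  have hρval : ρ = b * c - (lam - 1) := by rw [hρ, hρ_eq]
  have hρpos : 0 < ρ := by omega
  set m := (k - 1) / ρ with hm
  set k₁ := (k - 1) % ρ with hk₁
  set t := k₁ / b with ht
  set r := k₁ % b with hr
  have hk1ρ : k₁ < ρ := Nat.mod_lt _ hρpos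
  have hmk : ρ * m + k₁ = k - 1 := Nat.div_add_mod (k - 1) ρ
  have htr : b * t + r = k₁ := Nat.div_add_mod k₁ b
  have hrb : r < b := Nat.mod_lt _ (by omega)
  -- global rank bound
  have hcolunion : (Set.univ : Set (Fin n)) = ⋃ i ∈ (Finset.univ : Finset (Fin ℓ)), (A i : Set (Fin n)) := by
    ext j
    simp only [Set.mem_univ, true_iff, Set.mem_iUnion, Finset.mem_coe, Finset.mem_univ,
      exists_true_left, exists_prop, true_and]
    exact hAcover j
  have hglobal : k ≤ ℓ * ρ := by
    have h1 : G.rank = Module.finrank F (Submodule.span F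
        ((fun c : Fin n => fun r : Fin k => G r c) '' (Set.univ : Set (Fin n)))) := by
      have hre : Set.range Gᵀ
          = (fun c : Fin n => fun r : Fin k => G r c) '' (Set.univ : Set (Fin n)) := by
        rw [Set.image_univ]; rfl
      rw [Matrix.rank_eq_finrank_span_cols, show Set.range G.col = Set.range Gᵀ from rfl, hre]
    rw [hrank, hcolunion, Set.image_iUnion₂] at h1
    calc k = _ := h1
      _ ≤ (Finset.univ : Finset (Fin ℓ)).card * ρ :=
          finrank_span_biUnion_le' _ _ _ (fun i _ => hArank i)
      _ = ℓ * ρ := by simp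
  have hmℓ : m < ℓ := by
    have h2 : m * ρ < k := by rw [mul_comm]; omega
    exact Nat.lt_of_mul_lt_mul_right (show m * ρ < ℓ * ρ by omega)
  have htc' : t < (a + lam) / (b + 1) := by
    rw [hs_eq]
    have h3 : k₁ < c * b := by rw [mul_comm]; omega
    exact Nat.div_lt_iff_lt_mul (by omega) |>.mpr h3
  set i₀ : Fin ℓ := ⟨m, hmℓ⟩ with hi₀
  set j₀ : Fin ((a + lam) / (b + 1)) := ⟨t, htc'⟩ with hj₀
  set I : Finset (Fin ℓ) := (Finset.range m).attachFin
    (fun x hx => lt_trans (Finset.mem_range.mp hx) hmℓ) with hI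
  set J : Finset (Fin ((a + lam) / (b + 1))) := (Finset.range t).attachFin
    (fun x hx => lt_trans (Finset.mem_range.mp hx) htc') with hJ
  have hIcard : I.card = m := by rw [hI, Finset.card_attachFin, Finset.card_range]
  have hJcard : J.card = t := by rw [hJ, Finset.card_attachFin, Finset.card_range]
  have hmemI : ∀ i : Fin ℓ, i ∈ I ↔ (i : ℕ) < m := by
    intro i; rw [hI, Finset.mem_attachFin, Finset.mem_range]
  have hmemJ : ∀ j, j ∈ J ↔ (j : ℕ) < t := by
    intro j; rw [hJ, Finset.mem_attachFin, Finset.mem_range]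
  obtain ⟨R, hRsub, hRcard⟩ := Finset.exists_subset_card_eq
    (show r ≤ (B i₀ j₀).card by rw [hBcard]; omega)
  set S : Finset (Fin n) := (I.biUnion A ∪ J.biUnion (B i₀)) ∪ R with hS
  have hd1 : Disjoint (I.biUnion A) (J.biUnion (B i₀)) := by
    rw [Finset.disjoint_left]
    intro x hx1 hx2
    obtain ⟨i, hiI, hxi⟩ := Finset.mem_biUnion.mp hx1
    obtain ⟨j, hjJ, hxj⟩ := Finset.mem_biUnion.mp hx2
    have hne : i ≠ i₀ := by
      intro h
      have h4 := (hmemI i).mp hiI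
      rw [h] at h4
      exact lt_irrefl m h4
    exact Finset.disjoint_left.mp (hAdisj i i₀ hne) hxi (hBsub i₀ j hxj)
  have hd2 : Disjoint (I.biUnion A) R := by
    rw [Finset.disjoint_left]
    intro x hx1 hx2
    obtain ⟨i, hiI, hxi⟩ := Finset.mem_biUnion.mp hx1
    have hne : i ≠ i₀ := by
      intro h
      have h4 := (hmemI i).mp hiI
      rw [h] at h4
      exact lt_irrefl m h4
    exact Finset.disjoint_left.mp (hAdisj i i₀ hne) hxi (hBsub i₀ j₀ (hRsub hx2))
  have hd3 : Disjoint (J.biUnion (B i₀)) R := by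
    rw [Finset.disjoint_left]
    intro x hx1 hx2
    obtain ⟨j, hjJ, hxj⟩ := Finset.mem_biUnion.mp hx1
    have hne : j ≠ j₀ := by
      intro h
      have h4 := (hmemJ j).mp hjJ
      rw [h] at h4
      exact lt_irrefl t h4
    exact Finset.disjoint_left.mp (hBdisj i₀ j j₀ hne) hxj (hRsub hx2)
  have hcard1 : (I.biUnion A).card = m * (a + lam) := by
    rw [Finset.card_biUnion (fun i _ i' _ h => hAdisj i i' h),
      Finset.sum_congr rfl (fun i _ => hAcard i), Finset.sum_const, hIcard, smul_eq_mul]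
  have hcard2 : (J.biUnion (B i₀)).card = t * (b + 1) := by
    rw [Finset.card_biUnion (fun j _ j' _ h => hBdisj i₀ j j' h),
      Finset.sum_congr rfl (fun j _ => hBcard i₀ j), Finset.sum_const, hJcard, smul_eq_mul]
  have hScard : S.card = m * (a + lam) + t * (b + 1) + r := by
    rw [hS, Finset.card_union_of_disjoint (Finset.disjoint_union_left.mpr ⟨hd2, hd3⟩),
      Finset.card_union_of_disjoint hd1, hcard1, hcard2, hRcard]
  have hrankS : Module.finrank F (Submodule.span F
      ((fun c : Fin n => fun r : Fin k => G r c) '' (S : Set (Fin n)))) < k := by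
    have hX : Module.finrank F (Submodule.span F
        ((fun c : Fin n => fun r : Fin k => G r c) '' ((I.biUnion A : Finset (Fin n)) : Set (Fin n)))) ≤ m * ρ := by
      rw [Finset.coe_biUnion, Set.image_iUnion₂]
      refine le_trans ?_ (le_of_eq (congrArg (· * ρ) hIcard))
      exact finrank_span_biUnion_le' I _ ρ (fun i _ => hArank i)
    have hY : Module.finrank F (Submodule.span F
        ((fun c : Fin n => fun r : Fin k => G r c) '' ((J.biUnion (B i₀) : Finset (Fin n)) : Set (Fin n)))) ≤ t * b := by
      rw [Finset.coe_biUnion, Set.image_iUnion₂]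
      refine le_trans ?_ (le_of_eq (congrArg (· * b) hJcard))
      exact finrank_span_biUnion_le' J _ b (fun j _ => hBrank i₀ j)
    have hRr : Module.finrank F (Submodule.span F
        ((fun c : Fin n => fun r : Fin k => G r c) '' ((R : Finset (Fin n)) : Set (Fin n)))) ≤ r := by
      have himg : ((R.image (fun c : Fin n => fun r : Fin k => G r c) : Finset (Fin k → F)) : Set (Fin k → F))
          = (fun c : Fin n => fun r : Fin k => G r c) '' (R : Set (Fin n)) := Finset.coe_image
      rw [← himg]
      exact le_trans (finrank_span_finset_le_card _)
        (le_trans Finset.card_image_le (le_of_eq hRcard))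
    have e1 : (S : Set (Fin n)) = ((I.biUnion A : Finset (Fin n)) : Set (Fin n))
        ∪ ((J.biUnion (B i₀) : Finset (Fin n)) : Set (Fin n)) ∪ (R : Set (Fin n)) := by
      rw [hS]; simp [Finset.coe_union, Set.union_assoc]
    rw [e1, Set.image_union, Set.image_union, Submodule.span_union, Submodule.span_union]
    have hbound := le_trans (Submodule.finrank_add_le_finrank_add_finrank _ _)
      (add_le_add (le_trans (Submodule.finrank_add_le_finrank_add_finrank _ _)
        (add_le_add hX hY)) hRr)
    have hcomm1 : m * ρ = ρ * m := mul_comm _ _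
    have hcomm2 : t * b = b * t := mul_comm _ _
    omega
  obtain ⟨x, hx0, hxS⟩ := exists_vanishing_vector' G S hrankS
  have hd_le : d ≤ n - S.card := by
    refine le_trans (hdist x hx0) ?_
    have hsub : ({i | Matrix.vecMul x G i ≠ 0} : Finset (Fin n)) ⊆ Finset.univ \ S := by
      intro j hj
      rw [Finset.mem_sdiff]
      refine ⟨Finset.mem_univ j, fun hjS => ?_⟩
      rw [Finset.mem_filter] at hj
      exact hj.2 (hxS j hjS)
    calc hammingNorm (Matrix.vecMul x G)
        ≤ (Finset.univ \ S).card := Finset.card_le_card hsub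
      _ = n - S.card := by
          rw [Finset.card_sdiff_of_subset (Finset.subset_univ S), Finset.card_univ, Fintype.card_fin]
  have hSn : S.card ≤ n := by
    calc S.card ≤ (Finset.univ : Finset (Fin n)).card := Finset.card_le_card (Finset.subset_univ S)
      _ = n := by simp
  have hexp : t * (b + 1) = b * t + t := by ring
  omega
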